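/- Let v^k, w^k ∈ ℝ^d satisfy w^k = v^k + θ^k(v^k - v^{k-1}) with 0 ≤ θ^k ≤ θ̄ < 1, and suppose ‖v^{k+1} - w^k‖ ≤ rR for all k. Then Σ_{i=1}^k ‖v^i - v^{i-1}‖² ≤ r²kR²/(1 - θ̄)². -/

import Mathlib

open Finset

/-- For iterates `w k = v k + θ k • (v k - v (k-1))` with `0 ≤ θ k ≤ θ̄ < 1`
(with the convention `v (0 - 1) = v 0`, i.e. zero momentum at start)
and `‖v (k+1) - w k‖ ≤ r R`, we have
`∑_{i=1}^k ‖v i - v (i-1)‖² ≤ r² k R² / (1 - θ̄)²`. -/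
theorem stmt12 {d : ℕ} (r R θbar : ℝ) (hr : 0 < r) (hR : 0 < R)
    (hθ0 : 0 ≤ θbar) (hθ1 : θbar < 1)
    (v w : ℕ → EuclideanSpace ℝ (Fin d)) (θ : ℕ → ℝ)
    (hθ : ∀ k, 0 ≤ θ k ∧ θ k ≤ θbar)
    (hw : ∀ k : ℕ, w k = v k + θ k • (v k - v (k - 1)))
    (hstep : ∀ k : ℕ, ‖v (k + 1) - w k‖ ≤ r * R) :
    ∀ k : ℕ, ∑ i ∈ Finset.Icc 1 k, ‖v i - v (i - 1)‖ ^ 2 ≤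
      r ^ 2 * k * R ^ 2 / (1 - θbar) ^ 2 := by
  have h1θ : 0 < 1 - θbar := by linarith
  set M : ℝ := r * R / (1 - θbar) with hM
  have hMnn : 0 ≤ M := by positivity
  have key : ∀ k : ℕ, ‖v (k + 1) - v k‖ ≤ M := by
    intro k
    induction k with
    | zero =>
      have hs := hstep 0
      rw [hw 0] at hs
      simp only [Nat.zero_sub, sub_self, smul_zero, add_zero] at hs
      have : r * R ≤ M := by
        rw [hM, le_div_iff₀ h1θ]
        nlinarith [mul_pos hr hR]
      exact hs.trans this
    | succ n ih =>
      have hs := hstep (n + 1)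
      rw [hw (n + 1)] at hs
      simp only [Nat.add_sub_cancel] at hs
      have heq : v (n + 1 + 1) - v (n + 1) =
          (v (n + 1 + 1) - (v (n + 1) + θ (n + 1) • (v (n + 1) - v n)))
          + θ (n + 1) • (v (n + 1) - v n) := by abel
      have hθn := hθ (n + 1)
      calc ‖v (n + 1 + 1) - v (n + 1)‖
          ≤ ‖v (n + 1 + 1) - (v (n + 1) + θ (n + 1) • (v (n + 1) - v n))‖
            + ‖θ (n + 1) • (v (n + 1) - v n)‖ := by rw [heq]; exact norm_add_le _ _
        _ ≤ r * R + θbar * M := by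
            gcongr
            rw [norm_smul, Real.norm_eq_abs, abs_of_nonneg hθn.1]
            have hnn : (0:ℝ) ≤ ‖v (n + 1) - v n‖ := norm_nonneg _
            exact mul_le_mul hθn.2 ih hnn hθ0
        _ = M := by rw [hM]; field_simp; ring
  intro k
  have hterm : ∀ i ∈ Finset.Icc 1 k, ‖v i - v (i - 1)‖ ^ 2 ≤ M ^ 2 := by
    intro i hi
    have h1 : 1 ≤ i := (Finset.mem_Icc.mp hi).1
    obtain ⟨j, rfl⟩ := Nat.exists_eq_add_of_le h1
    simp only [Nat.add_sub_cancel, add_comm 1 j] at *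
    have := key j
    have hnn : (0:ℝ) ≤ ‖v (j + 1) - v j‖ := norm_nonneg _
    nlinarith
  calc ∑ i ∈ Finset.Icc 1 k, ‖v i - v (i - 1)‖ ^ 2
      ≤ ∑ i ∈ Finset.Icc 1 k, M ^ 2 := Finset.sum_le_sum hterm
    _ = k * M ^ 2 := by rw [Finset.sum_const, Nat.card_Icc]; simp [nsmul_eq_mul]
    _ = r ^ 2 * k * R ^ 2 / (1 - θbar) ^ 2 := by
        rw [hM]; field_simp
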